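/- arXiv:2406.06875 — 2 statements merged into one kernel-verified Lean document; each statement's English description precedes it below -/
import Mathlib

section
/- Let F be a holomorphic function on an open set containing the closed unit disk 𝔻̄ = {z ∈ ℂ : |z| ≤ 1} with F′(z) ≠ 0 for all z ∈ 𝔻̄, and let γ(θ) = F(e^{iθ}) be the associated boundary curve. Then the Whitney index of γ equals one: (1/(2πi)) ∫₀^{2π} γ″(θ)/γ′(θ) dθ = 1, where primes denote derivatives with respect to θ (note γ′(θ) = i e^{iθ} F′(e^{iθ}) never vanishes, so the integrand is well defined). -/
open Complex Metric Set

/-- The Whitney index of the boundary curve `γ(θ) = F(e^{iθ})` of a holomorphic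
immersion `F` of the closed unit disk equals one. -/
theorem stmt_2 (F : ℂ → ℂ) (U : Set ℂ) (hU : IsOpen U)
    (hDU : Metric.closedBall (0 : ℂ) 1 ⊆ U)
    (hF : DifferentiableOn ℂ F U)
    (hF' : ∀ z ∈ Metric.closedBall (0 : ℂ) 1, deriv F z ≠ 0)
    (γ : ℝ → ℂ) (hγ : ∀ θ : ℝ, γ θ = F (Complex.exp (θ * Complex.I))) :
    (1 / (2 * (Real.pi : ℂ) * Complex.I)) *
      ∫ θ in (0 : ℝ)..(2 * Real.pi), deriv (deriv γ) θ / deriv γ θ = 1 := by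
  have hπ : (Real.pi : ℝ) ≠ 0 := Real.pi_ne_zero
  set e : ℝ → ℂ := fun θ => Complex.exp (θ * Complex.I) with he
  have hγfun : γ = fun θ => F (e θ) := funext hγ
  have hmem : ∀ θ : ℝ, e θ ∈ Metric.closedBall (0 : ℂ) 1 := by
    intro θ
    simp [he, Metric.mem_closedBall, Complex.norm_exp]
  have hE0 : ∀ θ : ℝ, e θ ≠ 0 := fun θ => Complex.exp_ne_zero _
  -- analyticity
  have hanF : AnalyticOnNhd ℂ F U := hF.analyticOnNhd hU
  have hanF' : AnalyticOnNhd ℂ (deriv F) U := hanF.deriv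
  have hanF'' : AnalyticOnNhd ℂ (deriv (deriv F)) U := hanF'.deriv
  -- derivative of e
  have hde : ∀ θ : ℝ, HasDerivAt e (e θ * Complex.I) θ := by
    intro θ
    have h1 : HasDerivAt (fun z : ℂ => Complex.exp (z * Complex.I))
        (Complex.exp ((θ : ℂ) * Complex.I) * Complex.I) (θ : ℂ) := by
      have := (Complex.hasDerivAt_exp ((θ : ℂ) * Complex.I)).comp (θ : ℂ)
        ((hasDerivAt_id (θ : ℂ)).mul_const Complex.I)
      simpa [Function.comp_def] using this
    exact h1.comp_ofReal
  -- first derivative of γ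
  have hdγ : ∀ θ : ℝ, HasDerivAt γ (deriv F (e θ) * (e θ * Complex.I)) θ := by
    intro θ
    have hFd : HasDerivAt F (deriv F (e θ)) (e θ) :=
      ((hanF _ (hDU (hmem θ))).differentiableAt).hasDerivAt
    rw [hγfun]
    exact hFd.comp θ (hde θ)
  have hγ' : ∀ θ : ℝ, deriv γ θ = deriv F (e θ) * (e θ * Complex.I) :=
    fun θ => (hdγ θ).deriv
  -- second derivative of γ
  have hdγ' : ∀ θ : ℝ, HasDerivAt (deriv γ)
      (deriv (deriv F) (e θ) * (e θ * Complex.I) * (e θ * Complex.I)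
        + deriv F (e θ) * (e θ * Complex.I * Complex.I)) θ := by
    intro θ
    have hF'd : HasDerivAt (deriv F) (deriv (deriv F) (e θ)) (e θ) :=
      ((hanF' _ (hDU (hmem θ))).differentiableAt).hasDerivAt
    have h1 : HasDerivAt (fun θ : ℝ => deriv F (e θ))
        (deriv (deriv F) (e θ) * (e θ * Complex.I)) θ := hF'd.comp θ (hde θ)
    have h2 : HasDerivAt (fun θ : ℝ => e θ * Complex.I) (e θ * Complex.I * Complex.I) θ :=
      (hde θ).mul_const Complex.I
    have h3 : HasDerivAt (fun θ : ℝ => deriv F (e θ) * (e θ * Complex.I)) _ θ := h1.mul h2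
    have : (fun θ : ℝ => deriv F (e θ) * (e θ * Complex.I)) = deriv γ := (funext hγ').symm
    rw [this] at h3
    exact h3
  have hγ'' : ∀ θ : ℝ, deriv (deriv γ) θ
      = deriv (deriv F) (e θ) * (e θ * Complex.I) * (e θ * Complex.I)
        + deriv F (e θ) * (e θ * Complex.I * Complex.I) :=
    fun θ => (hdγ' θ).deriv
  -- the quotient function
  set g : ℂ → ℂ := fun z => deriv (deriv F) z / deriv F z with hg
  -- pointwise identity
  have key : ∀ θ : ℝ, deriv (deriv γ) θ / deriv γ θ
      = Complex.I + deriv (circleMap 0 1) θ • g (circleMap 0 1 θ) := by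
    intro θ
    have hcm : circleMap 0 1 θ = e θ := by simp [circleMap, he]
    rw [deriv_circleMap, hcm, hγ'' θ, hγ' θ, hg, smul_eq_mul]
    have hne : deriv F (e θ) ≠ 0 := hF' _ (hmem θ)
    have hne2 : deriv F (e θ) * (e θ * Complex.I) ≠ 0 :=
      mul_ne_zero hne (mul_ne_zero (hE0 θ) Complex.I_ne_zero)
    rw [div_eq_iff hne2]
    field_simp
    ring
  -- the open set where deriv F ≠ 0
  set V : Set ℂ := U ∩ deriv F ⁻¹' {0}ᶜ with hV
  have hVopen : IsOpen V :=
    (hanF'.continuousOn).isOpen_inter_preimage hU isOpen_compl_singleton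
  have hDV : Metric.closedBall (0 : ℂ) 1 ⊆ V := fun z hz => ⟨hDU hz, hF' z hz⟩
  have hgV : ∀ z ∈ V, DifferentiableAt ℂ g z := by
    intro z hz
    exact ((hanF'' z hz.1).differentiableAt).div ((hanF' z hz.1).differentiableAt) hz.2
  -- Cauchy: circle integral of g vanishes
  have hzero : (∮ z in C(0, 1), g z) = 0 := by
    refine circleIntegral_eq_zero_of_differentiable_on_off_countable zero_le_one
      Set.countable_empty (fun z hz => (hgV z (hDV hz)).continuousAt.continuousWithinAt)
      (fun z hz => hgV z (hDV (Metric.ball_subset_closedBall hz.1)))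
  -- continuity/integrability of the second summand
  have hgc : Continuous fun θ : ℝ => g (circleMap 0 1 θ) := by
    refine ContinuousOn.comp_continuous
      (fun z hz => (hgV z hz).continuousAt.continuousWithinAt)
      (continuous_circleMap 0 1) (fun θ => hDV ?_)
    simp [Metric.mem_closedBall]
  have hcont : Continuous fun θ : ℝ => deriv (circleMap 0 1) θ • g (circleMap 0 1 θ) := by
    simp only [deriv_circleMap]
    exact ((continuous_circleMap 0 1).mul continuous_const).smul hgc
  have hint2 : IntervalIntegrable (fun θ : ℝ => deriv (circleMap 0 1) θ • g (circleMap 0 1 θ))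
      MeasureTheory.volume 0 (2 * Real.pi) := hcont.intervalIntegrable _ _
  have hint1 : IntervalIntegrable (fun _ : ℝ => Complex.I)
      MeasureTheory.volume 0 (2 * Real.pi) := intervalIntegrable_const
  have hI : (∫ θ in (0 : ℝ)..(2 * Real.pi), deriv (deriv γ) θ / deriv γ θ)
      = 2 * (Real.pi : ℂ) * Complex.I := by
    rw [intervalIntegral.integral_congr (fun θ _ => key θ),
      intervalIntegral.integral_add hint1 hint2]
    have h2 : (∫ θ in (0 : ℝ)..(2 * Real.pi), deriv (circleMap 0 1) θ • g (circleMap 0 1 θ))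
        = ∮ z in C(0, 1), g z := rfl
    rw [h2, hzero, intervalIntegral.integral_const]
    simp
  rw [hI]
  have hIne : (Complex.I : ℂ) ≠ 0 := Complex.I_ne_zero
  have hπc : (Real.pi : ℂ) ≠ 0 := by exact_mod_cast hπ
  field_simp
end

section
/- For every β > 0 and every real s with 0 < |s| < 2π/β, the Laplace transform of the area distribution of the closed Brownian loop model equals (π/(2β)) · ∫_{−∞}^{∞} e^{−sA} / cosh²(πA/β) dA = (sβ/2) / sin(sβ/2). In particular (taking s = Λ/(16π)) the fixed-length partition function of the random-polygon model is W^{RP}(β,Λ) = W^{RP}(β,0) · (Λβ/(32π)) / sin(Λβ/(32π)), which diverges as |Λ|β approaches the maximal value 32π². -/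
open MeasureTheory Set Real

lemma beta_aux (c : ℝ) (hc0 : c ≠ 0) (hc1 : |c| < 1) :
    ∫ y in Set.Ioo (0:ℝ) 1, y ^ c * (1 - y) ^ (-c) = π * c / Real.sin (π * c) := by
  obtain ⟨hl, hr⟩ := abs_lt.mp hc1
  have h1 : (0:ℝ) < 1 - c := by linarith
  have h2 : (0:ℝ) < c + 1 := by linarith
  have hbeta := Complex.Gamma_mul_Gamma_eq_betaIntegral
      (s := (c:ℂ) + 1) (t := 1 - (c:ℂ))
      (by simp only [Complex.add_re, Complex.ofReal_re, Complex.one_re]; linarith)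
      (by simp only [Complex.sub_re, Complex.ofReal_re, Complex.one_re]; linarith)
  have hG2 : Complex.Gamma ((c:ℂ) + 1 + (1 - (c:ℂ))) = 1 := by
    rw [show (c:ℂ) + 1 + (1 - (c:ℂ)) = 1 + 1 by ring, Complex.Gamma_add_one _ one_ne_zero,
      Complex.Gamma_one, one_mul]
  rw [hG2, one_mul] at hbeta
  have hofreal : Complex.betaIntegral ((c:ℂ) + 1) (1 - (c:ℂ)) =
      ((∫ y in Set.Ioo (0:ℝ) 1, y ^ c * (1 - y) ^ (-c) : ℝ) : ℂ) := by
    rw [← MeasureTheory.integral_Ioc_eq_integral_Ioo,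
      ← intervalIntegral.integral_of_le zero_le_one, Complex.betaIntegral,
      ← intervalIntegral.integral_ofReal]
    apply intervalIntegral.integral_congr
    intro x hx
    rw [Set.uIcc_of_le zero_le_one] at hx
    have hx0 : (0:ℝ) ≤ x := hx.1
    have hx1 : (0:ℝ) ≤ 1 - x := by linarith [hx.2]
    push_cast
    rw [show (c:ℂ) + 1 - 1 = (c:ℝ) by push_cast; ring,
      show 1 - (c:ℂ) - 1 = ((-c : ℝ) : ℂ) by push_cast; ring,
      show 1 - (x:ℂ) = ((1 - x : ℝ) : ℂ) by push_cast; ring,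
      ← Complex.ofReal_cpow hx0, ← Complex.ofReal_cpow hx1]
  rw [hofreal] at hbeta
  have hRG : ((c:ℂ) + 1) = ((c + 1 : ℝ) : ℂ) := by push_cast; ring
  have hRG' : (1 - (c:ℂ)) = ((1 - c : ℝ) : ℂ) := by push_cast; ring
  rw [hRG, hRG', Complex.Gamma_ofReal, Complex.Gamma_ofReal, ← Complex.ofReal_mul] at hbeta
  have := Complex.ofReal_inj.mp hbeta
  rw [Real.Gamma_add_one hc0, mul_assoc, Real.Gamma_mul_Gamma_one_sub] at this
  rw [← this]; ring

/-- Laplace transform of the Brownian-loop (Lévy) area distribution: for `β > 0` and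
`0 < |s| < 2π/β`, `(π/(2β)) ∫ e^{−sA} / cosh²(πA/β) dA = (sβ/2)/sin(sβ/2)`. -/
theorem stmt_10 (β s : ℝ) (hβ : 0 < β) (hs0 : 0 < |s|) (hs : |s| < 2 * Real.pi / β) :
    (Real.pi / (2 * β)) *
      ∫ A : ℝ, Real.exp (-(s * A)) / (Real.cosh (Real.pi * A / β)) ^ 2
      = (s * β / 2) / Real.sin (s * β / 2) := by
  have hπ : (0:ℝ) < π := Real.pi_pos
  set a : ℝ := π / β with ha
  have ha0 : 0 < a := div_pos hπ hβ
  set c : ℝ := s * β / (2 * π) with hc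
  have hsne : s ≠ 0 := fun h => by simp [h] at hs0
  have hc0 : c ≠ 0 := by
    rw [hc]; exact div_ne_zero (mul_ne_zero hsne hβ.ne') (by positivity)
  have hc1 : |c| < 1 := by
    have h1 : |s| * β < 2 * π := (lt_div_iff₀ hβ).mp hs
    rw [hc, abs_div, abs_mul, abs_of_pos hβ, abs_of_pos (by positivity : (0:ℝ) < 2*π),
      div_lt_one (by positivity)]
    exact h1
  have h2ac : 2 * a * c = s := by
    rw [ha, hc]; field_simp
  have hpc : π * c = s * β / 2 := by
    rw [hc]; field_simp
  set g : ℝ → ℝ := fun x => (Real.exp (2*a*x) + 1)⁻¹ with hg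
  set g' : ℝ → ℝ := fun x => -(Real.exp (2*a*x) * (2*a)) / (Real.exp (2*a*x) + 1)^2 with hg'
  set F : ℝ → ℝ := fun y => (2/a) * (y ^ c * (1-y) ^ (-c)) with hF
  have hderiv : ∀ x ∈ (Set.univ : Set ℝ), HasDerivWithinAt g (g' x) Set.univ x := by
    intro x _
    have h1 : HasDerivAt (fun x : ℝ => 2*a*x) (2*a) x := by
      simpa using (hasDerivAt_id x).const_mul (2*a)
    have h2 : HasDerivAt (fun x : ℝ => Real.exp (2*a*x) + 1)
        (Real.exp (2*a*x) * (2*a)) x := (h1.exp).add_const 1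
    have h3 := h2.inv (by positivity)
    simp only [hg, hg']
    exact h3.hasDerivWithinAt
  have hinj : Set.InjOn g Set.univ := by
    intro x _ y _ hxy
    simp only [hg] at hxy
    have h1 : Real.exp (2*a*x) + 1 = Real.exp (2*a*y) + 1 := inv_injective hxy
    have h2 : 2*a*x = 2*a*y := Real.exp_injective (by linarith)
    exact mul_left_cancel₀ (by positivity) h2
  have himg : g '' Set.univ = Set.Ioo (0:ℝ) 1 := by
    ext y
    simp only [Set.image_univ, Set.mem_range, Set.mem_Ioo, hg]
    constructor
    · rintro ⟨x, rfl⟩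
      have hE := Real.exp_pos (2*a*x)
      refine ⟨by positivity, ?_⟩
      have h1 : (1:ℝ) < Real.exp (2*a*x) + 1 := by linarith
      exact inv_lt_one_of_one_lt₀ h1
    · rintro ⟨hy0, hy1⟩
      refine ⟨Real.log ((1-y)/y) / (2*a), ?_⟩
      have hq : 0 < (1-y)/y := div_pos (by linarith) hy0
      rw [show 2*a*(Real.log ((1-y)/y)/(2*a)) = Real.log ((1-y)/y) by field_simp,
        Real.exp_log hq,
        show (1-y)/y + 1 = 1/y by field_simp; ring,
        one_div, inv_inv]
  have hpt : ∀ x : ℝ, Real.exp (-(s*x)) / (Real.cosh (π*x/β))^2 = |g' x| • F (g x) := by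
    intro x
    have hE0 : 0 < Real.exp (2*a*x) := Real.exp_pos _
    have hax : π * x / β = a * x := by rw [ha]; ring
    have hcosh : (Real.cosh (a*x))^2
        = (Real.exp (2*a*x)+1)^2 / (4*Real.exp (2*a*x)) := by
      have he2 : Real.exp (2*a*x) = Real.exp (a*x) ^ 2 := by
        rw [sq, ← Real.exp_add]; ring_nf
      rw [Real.cosh_eq, Real.exp_neg, he2]
      field_simp
      ring
    have habs : |g' x| = (Real.exp (2*a*x) * (2*a)) / (Real.exp (2*a*x)+1)^2 := by
      simp only [hg']
      rw [abs_div, abs_neg, abs_of_nonneg (by positivity), abs_of_nonneg (by positivity)]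
    have hg2' : 1 - (Real.exp (2*a*x)+1)⁻¹
        = Real.exp (2*a*x)/(Real.exp (2*a*x)+1) := by
      field_simp
      ring
    have hrpow : ((Real.exp (2*a*x)+1)⁻¹) ^ c
        * (Real.exp (2*a*x)/(Real.exp (2*a*x)+1)) ^ (-c) = Real.exp (-(s*x)) := by
      rw [Real.rpow_def_of_pos (by positivity), Real.rpow_def_of_pos (by positivity),
        ← Real.exp_add]
      congr 1
      rw [Real.log_inv, Real.log_div hE0.ne' (by positivity), Real.log_exp, ← h2ac]
      ring
    rw [hax, hcosh, habs]
    simp only [hF, hg]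
    rw [hg2', hrpow, smul_eq_mul]
    field_simp
    ring
  have key : (∫ A : ℝ, Real.exp (-(s*A)) / (Real.cosh (π*A/β))^2)
      = ∫ y in Set.Ioo (0:ℝ) 1, F y := by
    rw [show (fun A : ℝ => Real.exp (-(s*A)) / (Real.cosh (π*A/β))^2)
        = fun x => |g' x| • F (g x) from funext hpt,
      ← MeasureTheory.setIntegral_univ,
      ← MeasureTheory.integral_image_eq_integral_abs_deriv_smul MeasurableSet.univ hderiv hinj F,
      himg]
  rw [key]
  have hFint : ∫ y in Set.Ioo (0:ℝ) 1, F y = (2/a) * (π*c/Real.sin (π*c)) := by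
    simp only [hF]
    rw [MeasureTheory.integral_const_mul, beta_aux c hc0 hc1]
  rw [hFint, hpc]
  have hh : π/(2*β) * (2/a) = 1 := by
    rw [ha]; field_simp
  rw [← mul_assoc, hh, one_mul]
end
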